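/- Fix n ≥ 1, ℓ ≥ 0, and 0 < μ < 1. There exist positive constants D and α (depending only on n, ℓ, μ) such that for every positive integer M and every real symmetric positive definite n×n matrix y with y ≥ μ·I_n, the sum S = Σ_T det(T)^{ℓ/2} det(y)^{ℓ/2} e^{-2π tr(Ty)}, taken over all positive definite T with M*T half-integral, satisfies S ≤ D * M^α. -/

import Mathlib

open Real

/-- A real symmetric matrix is half-integral if its diagonal entries are integers
and its off-diagonal entries lie in (1/2)ℤ. -/
def IsHalfIntegral {n : ℕ} (T : Matrix (Fin n) (Fin n) ℝ) : Prop :=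
  (∀ i, ∃ z : ℤ, T i i = z) ∧ ∀ i j, i ≠ j → ∃ z : ℤ, T i j = z / 2

open Matrix

section ScalarBound

lemma rpow_le_const_mul_exp (p : ℝ) (hp : 0 ≤ p) :
    ∃ c : ℝ, 1 ≤ c ∧ ∀ x : ℝ, 0 ≤ x → x ^ p ≤ c * Real.exp (Real.pi * x) := by
  rcases eq_or_lt_of_le hp with h | hp
  · refine ⟨1, le_refl 1, fun x hx => ?_⟩
    rw [← h, Real.rpow_zero, one_mul]
    exact Real.one_le_exp (by positivity)
  · refine ⟨max 1 ((p / Real.pi) ^ p), le_max_left _ _, fun x hx => ?_⟩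
    have hπ := Real.pi_pos
    have h2 : (Real.pi / p) * x ≤ Real.exp ((Real.pi / p) * x) := by
      have := Real.add_one_le_exp ((Real.pi / p) * x); linarith
    have h1 : x ≤ (p / Real.pi) * Real.exp ((Real.pi / p) * x) := by
      have hx2 : x = (p / Real.pi) * ((Real.pi / p) * x) := by field_simp
      nth_rewrite 1 [hx2]
      exact mul_le_mul_of_nonneg_left h2 (by positivity)
    calc x ^ p ≤ ((p / Real.pi) * Real.exp ((Real.pi / p) * x)) ^ p :=
          Real.rpow_le_rpow hx h1 hp.le
      _ = (p / Real.pi) ^ p * (Real.exp ((Real.pi / p) * x)) ^ p :=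
          Real.mul_rpow (by positivity) (Real.exp_pos _).le
      _ = (p / Real.pi) ^ p * Real.exp ((Real.pi / p) * x * p) := by
          rw [← Real.exp_mul]
      _ = (p / Real.pi) ^ p * Real.exp (Real.pi * x) := by
          congr 1; field_simp
      _ ≤ max 1 ((p / Real.pi) ^ p) * Real.exp (Real.pi * x) := by
          gcongr; exact le_max_right _ _

end ScalarBound

section MatrixAux

variable {n : ℕ}

lemma trace_eq_sum_eigenvalues' {A : Matrix (Fin n) (Fin n) ℝ} (hA : A.IsHermitian) :
    A.trace = ∑ i, hA.eigenvalues i := by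
  simpa using hA.trace_eq_sum_eigenvalues

lemma psd_trace_nonneg {A : Matrix (Fin n) (Fin n) ℝ} (hA : A.PosSemidef) : 0 ≤ A.trace := by
  rw [Matrix.trace]
  apply Finset.sum_nonneg
  intro i _
  have h := hA.dotProduct_mulVec_nonneg (Pi.single i 1)
  simpa [Matrix.mulVec_single, single_dotProduct, Matrix.diag] using h

open scoped MatrixOrder in
lemma trace_mul_psd_nonneg {A B : Matrix (Fin n) (Fin n) ℝ} (hA : A.PosSemidef)
    (hB : B.PosSemidef) : 0 ≤ (A * B).trace := by
  set S := CFC.sqrt A with hSdef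
  have hS : S * S = A := CFC.sqrt_mul_sqrt_self A hA.nonneg
  have hSH : Sᴴ = S := (CFC.sqrt_nonneg A).posSemidef.1
  have h2 : (S * B * S).PosSemidef := by
    have := hB.conjTranspose_mul_mul_same S
    rwa [hSH] at this
  have h1 : (A * B).trace = (S * B * S).trace := by
    rw [← hS, mul_assoc, Matrix.trace_mul_comm]
  rw [h1]
  exact psd_trace_nonneg h2

lemma trace_ge_mu {T y : Matrix (Fin n) (Fin n) ℝ} {μ : ℝ} (hT : T.PosSemidef)
    (hy : (y - μ • (1 : Matrix (Fin n) (Fin n) ℝ)).PosSemidef) :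
    μ * T.trace ≤ (T * y).trace := by
  have h := trace_mul_psd_nonneg hT hy
  have heq : (T * (y - μ • (1 : Matrix (Fin n) (Fin n) ℝ))).trace
      = (T * y).trace - μ * T.trace := by
    rw [Matrix.mul_sub, Matrix.trace_sub, Matrix.mul_smul, mul_one, Matrix.trace_smul]
    simp [smul_eq_mul]
  rw [heq] at h
  linarith

open scoped MatrixOrder in
lemma det_rpow_bound {T y : Matrix (Fin n) (Fin n) ℝ} (hT : T.PosDef) (hy : y.PosDef)
    {p c : ℝ}
    (hkey : ∀ x : ℝ, 0 ≤ x → x ^ p ≤ c * Real.exp (Real.pi * x)) :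
    T.det ^ p * y.det ^ p ≤ c ^ n * Real.exp (Real.pi * (T * y).trace) := by
  set S := CFC.sqrt T with hSdef
  have hS : S * S = T := CFC.sqrt_mul_sqrt_self T hT.posSemidef.nonneg
  have hSH : Sᴴ = S := (CFC.sqrt_nonneg T).posSemidef.1
  set B := S * y * S with hBdef
  have hB : B.PosSemidef := by
    have := hy.posSemidef.conjTranspose_mul_mul_same S
    rwa [hSH] at this
  have hdet : B.det = T.det * y.det := by
    rw [hBdef, Matrix.det_mul, Matrix.det_mul, ← hS, Matrix.det_mul]; ring
  have htr : B.trace = (T * y).trace := by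
    rw [hBdef, Matrix.trace_mul_cycle, hS]
  have heig : B.det = ∏ i, hB.1.eigenvalues i := by
    have := hB.1.det_eq_prod_eigenvalues
    simpa using this
  have htr2 : B.trace = ∑ i, hB.1.eigenvalues i := trace_eq_sum_eigenvalues' hB.1
  calc T.det ^ p * y.det ^ p = (T.det * y.det) ^ p :=
        (Real.mul_rpow hT.det_pos.le hy.det_pos.le).symm
    _ = (∏ i, hB.1.eigenvalues i) ^ p := by rw [← hdet, heig]
    _ = ∏ i, (hB.1.eigenvalues i) ^ p :=
        (Real.finset_prod_rpow _ _ (fun i _ => hB.eigenvalues_nonneg i) p).symm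
    _ ≤ ∏ i, (c * Real.exp (Real.pi * hB.1.eigenvalues i)) := by
        apply Finset.prod_le_prod
        · intro i _; exact Real.rpow_nonneg (hB.eigenvalues_nonneg i) _
        · intro i _; exact hkey _ (hB.eigenvalues_nonneg i)
    _ = c ^ n * Real.exp (Real.pi * ∑ i, hB.1.eigenvalues i) := by
        rw [Finset.prod_mul_distrib, Finset.prod_const, Finset.card_univ, Fintype.card_fin,
          Finset.mul_sum, Real.exp_sum]
    _ = c ^ n * Real.exp (Real.pi * (T * y).trace) := by rw [← htr2, htr]

lemma entry_abs_le {T : Matrix (Fin n) (Fin n) ℝ} (hT : T.PosSemidef) (i j : Fin n) :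
    |T i j| ≤ (T i i + T j j) / 2 := by
  have hsym : T j i = T i j := by
    have := hT.1.apply i j
    simpa using this
  rcases eq_or_ne i j with rfl | hij
  · have h := hT.dotProduct_mulVec_nonneg (Pi.single i 1)
    have h2 : 0 ≤ T i i := by
      simpa [Matrix.mulVec_single, single_dotProduct] using h
    rw [abs_of_nonneg h2]; linarith
  · have h1 := hT.dotProduct_mulVec_nonneg (Pi.single i 1 + Pi.single j 1)
    have h2 := hT.dotProduct_mulVec_nonneg (Pi.single i 1 - Pi.single j 1)
    simp only [star_trivial, Matrix.mulVec_add, Matrix.mulVec_sub, Matrix.mulVec_single,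
      add_dotProduct, sub_dotProduct, dotProduct_add, dotProduct_sub,
      single_dotProduct, mul_one, Pi.add_apply, Pi.sub_apply,
      MulOpposite.op_one, one_smul, one_mul, Matrix.col_apply] at h1 h2
    rw [abs_le]
    constructor <;> [skip; skip] <;> nlinarith [h1, h2, hsym]

end MatrixAux
set_option maxHeartbeats 1000000 in

lemma int_exp_summable {β : ℝ} (hβ : 0 < β) :
    Summable (fun a : ℤ => Real.exp (-β * |(a : ℝ)|)) ∧
      (∑' a : ℤ, Real.exp (-β * |(a : ℝ)|)) ≤ 2 / β + 2 := by
  set r := Real.exp (-β) with hrdef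
  have hr0 : 0 < r := Real.exp_pos _
  have hr1 : r < 1 := by
    rw [hrdef, Real.exp_lt_one_iff]; linarith
  have hfun : (fun a : ℤ => Real.exp (-β * |(a : ℝ)|)) = fun a : ℤ => r ^ a.natAbs := by
    funext a
    rw [hrdef, ← Real.exp_nat_mul]
    congr 1
    have h : ((a.natAbs : ℝ)) = |(a : ℝ)| := by
      rw [Nat.cast_natAbs]; push_cast; rfl
    rw [h]; ring
  have hgeo : HasSum (fun k : ℕ => r ^ k) (1 - r)⁻¹ :=
    hasSum_geometric_of_lt_one hr0.le hr1
  have h1 : HasSum (fun k : ℕ => r ^ ((k : ℤ).natAbs)) (1 - r)⁻¹ := by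
    simpa using hgeo
  have h2 : HasSum (fun k : ℕ => r ^ ((-(k : ℤ)).natAbs)) (1 - r)⁻¹ := by
    simpa using hgeo
  have hsum : HasSum (fun a : ℤ => r ^ a.natAbs) ((1 - r)⁻¹ + (1 - r)⁻¹ - r ^ (0 : ℤ).natAbs) :=
    h1.of_nat_of_neg h2
  rw [Int.natAbs_zero, pow_zero] at hsum
  rw [hfun]
  refine ⟨hsum.summable, ?_⟩
  rw [hsum.tsum_eq]
  have h1r : β / (1 + β) ≤ 1 - r := by
    have hexp : 1 + β ≤ Real.exp β := by
      have := Real.add_one_le_exp β; linarith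
    have : r ≤ (1 + β)⁻¹ := by
      rw [hrdef, Real.exp_neg]
      exact inv_anti₀ (by linarith) hexp
    have heq : 1 - (1 + β)⁻¹ = β / (1 + β) := by field_simp; ring
    linarith [heq ▸ sub_le_sub_left this 1]
  have hpos : 0 < β / (1 + β) := by positivity
  have hinv : (1 - r)⁻¹ ≤ (1 + β) / β := by
    rw [← one_div]
    rw [show (1+β)/β = 1/(β/(1+β)) by field_simp]
    exact one_div_le_one_div_of_le hpos h1r
  have : (1 + β) / β = 1 / β + 1 := by field_simp
  rw [this] at hinv
  have h2β : 0 < 2 / β := by positivity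
  have h1β : 2/β = 2*(1/β) := by ring
  linarith [hinv]

set_option maxHeartbeats 1000000 in
lemma pi_prod_summable {u : ℤ → ℝ} (hu0 : ∀ a, 0 ≤ u a) (hu : Summable u) (m : ℕ) :
    Summable (fun x : Fin m → ℤ => ∏ i, u (x i)) ∧
      (∑' x : Fin m → ℤ, ∏ i, u (x i)) = (∑' a, u a) ^ m := by
  induction m with
  | zero =>
    constructor
    · apply summable_of_ne_finset_zero (s := {(fun i => i.elim0 : Fin 0 → ℤ)})
      intro b hb
      exact absurd (Finset.mem_singleton.mpr (funext fun i => i.elim0)) hb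
    · rw [tsum_eq_single (fun i => i.elim0 : Fin 0 → ℤ)
        (fun b hb => absurd (funext fun i => i.elim0) hb)]
      simp
  | succ m ih =>
    obtain ⟨ihS, ihT⟩ := ih
    let e : (Fin (m + 1) → ℤ) ≃ ℤ × (Fin m → ℤ) :=
      { toFun := fun x => (x 0, fun i => x i.succ)
        invFun := fun q => Fin.cons q.1 q.2
        left_inv := fun x => by
          funext i
          refine Fin.cases ?_ ?_ i <;> simp
        right_inv := fun q => by simp }
    set F : ℤ × (Fin m → ℤ) → ℝ := fun q => u q.1 * ∏ i, u (q.2 i) with hF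
    have hu0' : 0 ≤ u := fun a => hu0 a
    have hP0 : 0 ≤ (fun x : Fin m → ℤ => ∏ i, u (x i)) :=
      fun x => Finset.prod_nonneg fun i _ => hu0 _
    have hFS : Summable F :=
      Summable.mul_of_nonneg (f := u) (g := fun x : Fin m → ℤ => ∏ i, u (x i)) hu ihS hu0' hP0
    have hcomp : (fun x : Fin (m + 1) → ℤ => ∏ i, u (x i)) = F ∘ e := by
      funext x
      simp only [hF, Function.comp_apply]
      exact Fin.prod_univ_succ _
    constructor
    · rw [hcomp]
      exact (e.summable_iff).mpr hFS
    · rw [hcomp]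
      have ht : ∑' x : Fin (m + 1) → ℤ, (F ∘ e) x = ∑' q, F q := e.tsum_eq F
      rw [ht]
      have hsplit : ∑' q : ℤ × (Fin m → ℤ), F q
          = ∑' a : ℤ, ∑' x : Fin m → ℤ, u a * ∏ i, u (x i) := by
        exact Summable.tsum_prod' hFS (fun a => ihS.mul_left (u a))
      rw [hsplit]
      have : ∀ a : ℤ, ∑' x : Fin m → ℤ, u a * ∏ i, u (x i) = u a * (∑' a, u a) ^ m := by
        intro a
        rw [tsum_mul_left, ihT]
      rw [tsum_congr this, tsum_mul_right, pow_succ]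
      ring

set_option maxHeartbeats 1000000 in
theorem full_sum_bound (n : ℕ) (hn : 1 ≤ n) (ℓ : ℝ) (hℓ : 0 ≤ ℓ) (μ : ℝ)
    (hμ0 : 0 < μ) (hμ1 : μ < 1) :
    ∃ D α : ℝ, 0 < D ∧ 0 < α ∧
      ∀ M : ℕ, 1 ≤ M →
        ∀ y : Matrix (Fin n) (Fin n) ℝ, y.IsSymm → y.PosDef →
          (y - μ • (1 : Matrix (Fin n) (Fin n) ℝ)).PosSemidef →
          Summable (fun T : {T : Matrix (Fin n) (Fin n) ℝ //
              T.PosDef ∧ IsHalfIntegral ((M : ℝ) • T)} =>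
            T.1.det ^ (ℓ / 2) * y.det ^ (ℓ / 2) *
              Real.exp (-(2 * Real.pi * (T.1 * y).trace))) ∧
          (∑' T : {T : Matrix (Fin n) (Fin n) ℝ //
              T.PosDef ∧ IsHalfIntegral ((M : ℝ) • T)},
            T.1.det ^ (ℓ / 2) * y.det ^ (ℓ / 2) *
              Real.exp (-(2 * Real.pi * (T.1 * y).trace))) ≤ D * (M : ℝ) ^ α := by
  obtain ⟨c, hc1, hkey⟩ := rpow_le_const_mul_exp (ℓ / 2) (by linarith)
  have hc0 : 0 < c := lt_of_lt_of_le one_pos hc1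
  have hπ := Real.pi_pos
  have hn0 : (0 : ℝ) < n := by exact_mod_cast hn
  set K : ℝ := 4 * n / (Real.pi * μ) + 2 with hKdef
  have hK0 : 0 < K := by positivity
  refine ⟨c ^ n * K ^ (n * n), ((n * n : ℕ) : ℝ), by positivity, ?_, ?_⟩
  · have : 0 < n * n := Nat.mul_pos hn hn
    exact_mod_cast this
  intro M hM y hysymm hypd hyge
  have hM0 : (0 : ℝ) < M := by exact_mod_cast hM
  set β : ℝ := Real.pi * μ / (2 * n * M) with hβdef
  have hβ0 : 0 < β := by positivity
  set u : ℤ → ℝ := fun a => Real.exp (-β * |(a : ℝ)|) with hudef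
  have hu0 : ∀ a, 0 ≤ u a := fun a => (Real.exp_pos _).le
  obtain ⟨huS, huB⟩ := int_exp_summable hβ0
  have hub : (∑' a, u a) ≤ K * M := by
    have h2β : 2 / β + 2 ≤ K * M := by
      rw [hβdef, hKdef]
      have hne : Real.pi * μ ≠ 0 := by positivity
      have h1 : 2 / (Real.pi * μ / (2 * n * M)) = 4 * n * M / (Real.pi * μ) := by
        field_simp; ring
      rw [h1]
      have h2 : (4 * n / (Real.pi * μ) + 2) * M = 4 * n * M / (Real.pi * μ) + 2 * M := by
        field_simp
      rw [h2]
      have hM1 : (1 : ℝ) ≤ M := by exact_mod_cast hM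
      have : (2 : ℝ) ≤ 2 * M := by linarith
      linarith
    exact le_trans huB h2β
  have htsum_u_nonneg : 0 ≤ ∑' a, u a := tsum_nonneg hu0
  obtain ⟨hgS', hgT'⟩ := pi_prod_summable hu0 huS (n * n)
  -- transfer Fin (n*n) → Fin n × Fin n
  set e2 : (Fin n × Fin n) ≃ Fin (n * n) := finProdFinEquiv with he2
  set E : ((Fin n × Fin n) → ℤ) ≃ ((Fin (n * n)) → ℤ) := Equiv.arrowCongr e2 (Equiv.refl ℤ)
    with hE
  have hcompE : (fun x : (Fin n × Fin n) → ℤ => ∏ p, u (x p))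
      = (fun z : Fin (n * n) → ℤ => ∏ k, u (z k)) ∘ E := by
    funext x
    rw [Function.comp_apply]
    rw [← Equiv.prod_comp e2 (fun k => u (E x k))]
    apply Finset.prod_congr rfl
    intro p _
    congr 1
    simp [hE, Equiv.arrowCongr]
  have hgS : Summable (fun x : (Fin n × Fin n) → ℤ => ∏ p, u (x p)) := by
    rw [hcompE]; exact (E.summable_iff).mpr hgS'
  have hgT : (∑' x : (Fin n × Fin n) → ℤ, ∏ p, u (x p)) = (∑' a, u a) ^ (n * n) := by
    rw [hcompE]
    have := E.tsum_eq (fun z : Fin (n * n) → ℤ => ∏ k, u (z k))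
    rw [show ∑' (x : (Fin n × Fin n) → ℤ),
        ((fun z : Fin (n * n) → ℤ => ∏ k, u (z k)) ∘ E) x
        = ∑' (x : (Fin n × Fin n) → ℤ), (fun z : Fin (n * n) → ℤ => ∏ k, u (z k)) (E x)
      from rfl, this, hgT']
  -- the injection
  set ST := {T : Matrix (Fin n) (Fin n) ℝ // T.PosDef ∧ IsHalfIntegral ((M : ℝ) • T)} with hST
  set φ : ST → ((Fin n × Fin n) → ℤ) :=
    fun T p => round (2 * (M : ℝ) * T.1 p.1 p.2) with hφ
  have hint : ∀ (T : ST) (p : Fin n × Fin n), ∃ w : ℤ, 2 * (M : ℝ) * T.1 p.1 p.2 = w := by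
    intro T p
    rcases eq_or_ne p.1 p.2 with hpq | hpq
    · obtain ⟨z, hz⟩ := T.2.2.1 p.1
      refine ⟨2 * z, ?_⟩
      rw [Matrix.smul_apply, smul_eq_mul] at hz
      rw [hpq] at hz ⊢
      push_cast
      linarith
    · obtain ⟨z, hz⟩ := T.2.2.2 p.1 p.2 hpq
      refine ⟨z, ?_⟩
      rw [Matrix.smul_apply, smul_eq_mul] at hz
      linarith
  have hφval : ∀ (T : ST) (p : Fin n × Fin n), ((φ T p : ℤ) : ℝ) = 2 * (M : ℝ) * T.1 p.1 p.2 := by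
    intro T p
    obtain ⟨w, hw⟩ := hint T p
    rw [hφ]
    simp only []
    rw [hw, round_intCast]
  have hφinj : Function.Injective φ := by
    intro T T' h
    apply Subtype.ext
    ext i j
    have h1 := congrFun h (i, j)
    have h2 : 2 * (M : ℝ) * T.1 i j = 2 * (M : ℝ) * T'.1 i j := by
      rw [← hφval T (i, j), ← hφval T' (i, j), h1]
    have h2M : (2 : ℝ) * M ≠ 0 := by positivity
    exact mul_left_cancel₀ h2M h2
  set g : ((Fin n × Fin n) → ℤ) → ℝ := fun x => c ^ n * ∏ p, u (x p) with hg
  have hgSummable : Summable g := hgS.mul_left (c ^ n)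
  have hg0 : ∀ x, 0 ≤ g x := by
    intro x
    exact mul_nonneg (by positivity) (Finset.prod_nonneg fun p _ => hu0 _)
  -- pointwise bound
  have hle : ∀ T : ST, T.1.det ^ (ℓ / 2) * y.det ^ (ℓ / 2) *
      Real.exp (-(2 * Real.pi * (T.1 * y).trace)) ≤ g (φ T) := by
    intro T
    set t := (T.1 * y).trace with ht
    have hTpd := T.2.1
    have hdb := det_rpow_bound hTpd hypd (p := ℓ / 2) (c := c) hkey
    have htrμ : μ * T.1.trace ≤ t := trace_ge_mu hTpd.posSemidef hyge
    have habs : ∑ p : Fin n × Fin n, |T.1 p.1 p.2| ≤ n * T.1.trace := by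
      calc ∑ p : Fin n × Fin n, |T.1 p.1 p.2|
          ≤ ∑ p : Fin n × Fin n, (T.1 p.1 p.1 + T.1 p.2 p.2) / 2 :=
            Finset.sum_le_sum fun p _ => entry_abs_le hTpd.posSemidef p.1 p.2
        _ = n * T.1.trace := by
            rw [Fintype.sum_prod_type]
            have h1 : ∀ i, ∑ j, (T.1 i i + T.1 j j) / 2
                = ((n : ℝ) * T.1 i i + T.1.trace) / 2 := by
              intro i
              rw [← Finset.sum_div, Finset.sum_add_distrib, Finset.sum_const,
                Finset.card_univ, Fintype.card_fin]
              simp [Matrix.trace, Matrix.diag, nsmul_eq_mul]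
            rw [Finset.sum_congr rfl (fun i _ => h1 i), ← Finset.sum_div,
              Finset.sum_add_distrib, ← Finset.mul_sum, Finset.sum_const,
              Finset.card_univ, Fintype.card_fin]
            have htr : ∑ i, T.1 i i = T.1.trace := by
              simp [Matrix.trace, Matrix.diag]
            rw [htr]
            simp only [nsmul_eq_mul]
            ring
    -- chain
    have step1 : T.1.det ^ (ℓ / 2) * y.det ^ (ℓ / 2) *
        Real.exp (-(2 * Real.pi * t)) ≤ c ^ n * Real.exp (-(Real.pi * t)) := by
      calc T.1.det ^ (ℓ / 2) * y.det ^ (ℓ / 2) * Real.exp (-(2 * Real.pi * t))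
          ≤ (c ^ n * Real.exp (Real.pi * t)) * Real.exp (-(2 * Real.pi * t)) := by
            apply mul_le_mul_of_nonneg_right hdb (Real.exp_pos _).le
        _ = c ^ n * Real.exp (-(Real.pi * t)) := by
            rw [mul_assoc, ← Real.exp_add,
              show Real.pi * t + -(2 * Real.pi * t) = -(Real.pi * t) by ring]
    have step2 : Real.exp (-(Real.pi * t)) ≤ Real.exp (-(Real.pi * μ * T.1.trace)) := by
      apply Real.exp_le_exp.mpr
      have := mul_le_mul_of_nonneg_left htrμ hπ.le
      nlinarith
    have step3 : Real.exp (-(Real.pi * μ * T.1.trace)) ≤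
        ∏ p : Fin n × Fin n, u (φ T p) := by
      have hs : Real.pi * μ / n * ∑ p : Fin n × Fin n, |T.1 p.1 p.2| ≤ Real.pi * μ * T.1.trace := by
        have hc2 : Real.pi * μ / n * (n * T.1.trace) = Real.pi * μ * T.1.trace := by
          field_simp
        calc Real.pi * μ / n * ∑ p : Fin n × Fin n, |T.1 p.1 p.2|
            ≤ Real.pi * μ / n * (n * T.1.trace) := by
              apply mul_le_mul_of_nonneg_left habs (by positivity)
          _ = Real.pi * μ * T.1.trace := hc2
      calc Real.exp (-(Real.pi * μ * T.1.trace))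
          ≤ Real.exp (-(Real.pi * μ / n * ∑ p : Fin n × Fin n, |T.1 p.1 p.2|)) := by
            apply Real.exp_le_exp.mpr; linarith
        _ = ∏ p : Fin n × Fin n, Real.exp (-(Real.pi * μ / n) * |T.1 p.1 p.2|) := by
            rw [← Real.exp_sum]
            congr 1
            simp only [neg_mul]
            rw [Finset.mul_sum]
            exact (Finset.sum_neg_distrib _).symm
        _ = ∏ p : Fin n × Fin n, u (φ T p) := by
            apply Finset.prod_congr rfl
            intro p _
            rw [hudef]
            simp only []
            congr 1
            have habsp : |((φ T p : ℤ) : ℝ)| = 2 * M * |T.1 p.1 p.2| := by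
              rw [hφval T p, abs_mul, abs_of_nonneg (by positivity : (0:ℝ) ≤ 2 * (M:ℝ))]
            rw [habsp, hβdef]
            field_simp
    calc T.1.det ^ (ℓ / 2) * y.det ^ (ℓ / 2) * Real.exp (-(2 * Real.pi * t))
        ≤ c ^ n * Real.exp (-(Real.pi * t)) := step1
      _ ≤ c ^ n * Real.exp (-(Real.pi * μ * T.1.trace)) := by
          apply mul_le_mul_of_nonneg_left step2 (by positivity)
      _ ≤ c ^ n * ∏ p : Fin n × Fin n, u (φ T p) := by
          apply mul_le_mul_of_nonneg_left step3 (by positivity)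
      _ = g (φ T) := rfl
  have hf0 : ∀ T : ST, 0 ≤ T.1.det ^ (ℓ / 2) * y.det ^ (ℓ / 2) *
      Real.exp (-(2 * Real.pi * (T.1 * y).trace)) := by
    intro T
    have h1 : 0 ≤ T.1.det ^ (ℓ / 2) := Real.rpow_nonneg T.2.1.det_pos.le _
    have h2 : 0 ≤ y.det ^ (ℓ / 2) := Real.rpow_nonneg hypd.det_pos.le _
    positivity
  have hfS : Summable (fun T : ST => T.1.det ^ (ℓ / 2) * y.det ^ (ℓ / 2) *
      Real.exp (-(2 * Real.pi * (T.1 * y).trace))) :=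
    Summable.of_nonneg_of_le hf0 hle (hgSummable.comp_injective hφinj)
  refine ⟨hfS, ?_⟩
  have hstep : (∑' T : ST, T.1.det ^ (ℓ / 2) * y.det ^ (ℓ / 2) *
      Real.exp (-(2 * Real.pi * (T.1 * y).trace))) ≤ ∑' x, g x :=
    Summable.tsum_le_tsum_of_inj φ hφinj (fun x _ => hg0 x) hle hfS hgSummable
  have hgval : (∑' x, g x) = c ^ n * (∑' a, u a) ^ (n * n) := by
    rw [hg]
    rw [tsum_mul_left, hgT]
  have hfinal : c ^ n * (∑' a, u a) ^ (n * n) ≤ c ^ n * K ^ (n * n) * (M : ℝ) ^ ((n * n : ℕ) : ℝ) := by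
    rw [Real.rpow_natCast]
    have h1 : (∑' a, u a) ^ (n * n) ≤ (K * M) ^ (n * n) :=
      pow_le_pow_left₀ htsum_u_nonneg hub _
    calc c ^ n * (∑' a, u a) ^ (n * n) ≤ c ^ n * (K * M) ^ (n * n) := by
          apply mul_le_mul_of_nonneg_left h1 (by positivity)
      _ = c ^ n * K ^ (n * n) * (M : ℝ) ^ (n * n) := by
          rw [mul_pow]; ring
  calc (∑' T : ST, T.1.det ^ (ℓ / 2) * y.det ^ (ℓ / 2) *
      Real.exp (-(2 * Real.pi * (T.1 * y).trace)))
      ≤ ∑' x, g x := hstep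
    _ = c ^ n * (∑' a, u a) ^ (n * n) := hgval
    _ ≤ c ^ n * K ^ (n * n) * (M : ℝ) ^ ((n * n : ℕ) : ℝ) := hfinal
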